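/- Let N ≥ λ_1 ≥ λ_2 + 2 with λ_2 ≥ 0, and for z ∈ ℂ let U_z be the A_N-submodule of A_N^{⊕2} generated by the two elements (z t^{N−λ_1}, t^{N−λ_1+1}) and (t^{N−λ_2−1}, z t^{N−λ_2}). Then for every z ∉ {0, 1, −1}, U_z is isomorphic as an A_N-module to ℂ[t]/(t^{λ_1}) ⊕ ℂ[t]/(t^{λ_2}), while U_0 is isomorphic to ℂ[t]/(t^{λ_1−1}) ⊕ ℂ[t]/(t^{λ_2+1}). -/

import Mathlib

set_option synthInstance.maxHeartbeats 1000000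
set_option maxHeartbeats 1000000

open Polynomial Finset

/-- The truncated polynomial ring `A_N = ℂ[t]/(t^N)`. -/
abbrev AN (N : ℕ) : Type := Polynomial ℂ ⧸ Ideal.span {(X : Polynomial ℂ) ^ N}

/-- The class of `t` in `A_N`. -/
noncomputable def tbar (N : ℕ) : AN N := Ideal.Quotient.mk _ X

/-- The `A_N`-module `ℂ[t]/(t^l)`, realized as `A_N/(t̄^l)` (for `l ≤ N`). -/
abbrev Uc (N l : ℕ) : Type := AN N ⧸ Ideal.span {tbar N ^ l}

/-- The `A_N`-submodule of `A_N ⊕ A_N` generated by `(z t^{N-λ₁}, t^{N-λ₁+1})` and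
`(t^{N-λ₂-1}, z t^{N-λ₂})`. -/
noncomputable def Uz (N l1 l2 : ℕ) (z : ℂ) : Submodule (AN N) (AN N × AN N) :=
  Submodule.span (AN N)
    {(z • tbar N ^ (N - l1), tbar N ^ (N - l1 + 1)),
     (tbar N ^ (N - l2 - 1), z • tbar N ^ (N - l2))}

lemma tbar_pow_N (N : ℕ) : tbar N ^ N = 0 := by
  rw [tbar, ← map_pow, Ideal.Quotient.eq_zero_iff_mem]
  exact Ideal.subset_span rfl

lemma mul_tbar_pow_eq_zero_iff (N j : ℕ) (hj : j ≤ N) (r : AN N) :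
    r * tbar N ^ j = 0 ↔ r ∈ Ideal.span {tbar N ^ (N - j)} := by
  constructor
  · intro h
    obtain ⟨p, rfl⟩ := Ideal.Quotient.mk_surjective r
    rw [tbar, ← map_pow, ← map_mul, Ideal.Quotient.eq_zero_iff_mem,
      Ideal.mem_span_singleton] at h
    have hXN : (X : Polynomial ℂ) ^ N = X ^ (N - j) * X ^ j := by
      rw [← pow_add]; congr 1; omega
    rw [hXN] at h
    obtain ⟨q, hq⟩ := (mul_dvd_mul_iff_right (pow_ne_zero j (X_ne_zero (R := ℂ)))).mp h
    rw [Ideal.mem_span_singleton]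
    exact ⟨Ideal.Quotient.mk _ q, by rw [hq, map_mul, map_pow, tbar]⟩
  · intro h
    rw [Ideal.mem_span_singleton] at h
    obtain ⟨c, hc⟩ := h
    rw [hc, mul_comm _ c, mul_assoc, ← pow_add, show N - j + j = N from by omega,
      tbar_pow_N, mul_zero]

lemma span_pair_equiv (N m k : ℕ) (x y : AN N × AN N)
    (h : ∀ r s : AN N, r • x + s • y = 0 ↔
      r ∈ Ideal.span {tbar N ^ m} ∧ s ∈ Ideal.span {tbar N ^ k}) :
    Nonempty (↥(Submodule.span (AN N) {x, y}) ≃ₗ[AN N] Uc N m × Uc N k) := by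
  let A := AN N
  let I : Ideal (AN N) := Ideal.span {tbar N ^ m}
  let J : Ideal (AN N) := Ideal.span {tbar N ^ k}
  let φ : (A × A) →ₗ[A] (A × A) :=
    (LinearMap.toSpanSingleton A _ x).coprod (LinearMap.toSpanSingleton A _ y)
  have hrange : LinearMap.range φ = Submodule.span A {x, y} := by
    rw [LinearMap.range_coprod, ← LinearMap.span_singleton_eq_range,
      ← LinearMap.span_singleton_eq_range, Submodule.span_insert]
  let ψ : (A × A) →ₗ[A] (A ⧸ I) × (A ⧸ J) := (I.mkQ).prodMap (J.mkQ)
  have hker : LinearMap.ker φ = LinearMap.ker ψ := by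
    rw [LinearMap.ker_prodMap, Submodule.ker_mkQ, Submodule.ker_mkQ]
    ext ⟨r, s⟩
    simp only [LinearMap.mem_ker, LinearMap.coprod_apply,
      LinearMap.toSpanSingleton_apply, Submodule.mem_prod, φ]
    exact h r s
  have hsurj : Function.Surjective ψ :=
    Function.Surjective.prodMap (Submodule.mkQ_surjective I) (Submodule.mkQ_surjective J)
  exact ⟨(LinearEquiv.ofEq _ _ hrange.symm).trans <|
    (φ.quotKerEquivRange.symm).trans <|
    (Submodule.quotEquivOfEq _ _ hker).trans <|
    ψ.quotKerEquivOfSurjective hsurj⟩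

theorem stmt7 (N l1 l2 : ℕ) (h1 : l1 ≤ N) (h2 : l2 + 2 ≤ l1) :
    (∀ z : ℂ, z ≠ 0 → z ≠ 1 → z ≠ -1 →
      Nonempty (↥(Uz N l1 l2 z) ≃ₗ[AN N] (Uc N l1 × Uc N l2))) ∧
    Nonempty (↥(Uz N l1 l2 0) ≃ₗ[AN N] (Uc N (l1 - 1) × Uc N (l2 + 1))) := by
  obtain ⟨e, rfl⟩ : ∃ e, l1 = l2 + 2 + e := ⟨l1 - l2 - 2, by omega⟩
  obtain ⟨a, rfl⟩ : ∃ a, N = l2 + 2 + e + a := ⟨N - (l2 + 2 + e), by omega⟩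
  set n : ℕ := l2 + 2 + e + a with hn
  set T : AN n := tbar n with hT
  have hs1 : n - (l2 + 2 + e) = a := by omega
  have hs3 : n - l2 - 1 = a + e + 1 := by omega
  have hs4 : n - l2 = a + e + 2 := by omega
  -- kernel characterizations
  have hann : ∀ (j m : ℕ), j + m = n → ∀ r : AN n, (r * T ^ j = 0 ↔ r ∈ Ideal.span {T ^ m}) := by
    intro j m hjm r
    rw [mul_tbar_pow_eq_zero_iff n j (by omega) r, show n - j = m from by omega]
  constructor
  · intro z hz0 hz1 hzn1
    have hzz : z⁻¹ * z = 1 := inv_mul_cancel₀ hz0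
    have hw : z - z⁻¹ ≠ 0 := by
      intro h
      have h' : z = z⁻¹ := sub_eq_zero.mp h
      have hz2 : z * z = 1 := by
        field_simp at h'
        linear_combination h'
      have hfac : (z - 1) * (z + 1) = 0 := by linear_combination hz2
      rcases mul_eq_zero.mp hfac with h2 | h2
      · exact hz1 (by linear_combination h2)
      · exact hzn1 (by linear_combination h2)
    set w : ℂ := z - z⁻¹ with hwdef
    set v1 : AN n × AN n := (z • T ^ a, T ^ (a + 1)) with hv1
    set v2 : AN n × AN n := (T ^ (a + e + 1), z • T ^ (a + e + 2)) with hv2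
    set y0 : AN n × AN n := ((0 : AN n), T ^ (a + e + 2)) with hy0
    have hUz : Uz n (l2 + 2 + e) l2 z = Submodule.span (AN n) {v1, y0} := by
      have hgen : Uz n (l2 + 2 + e) l2 z = Submodule.span (AN n) {v1, v2} := by
        rw [Uz, hs1, hs3, hs4]
      rw [hgen]
      apply le_antisymm
      · apply Submodule.span_le.mpr
        rintro v hv
        rcases hv with hv | hv
        · exact hv ▸ Submodule.subset_span (Set.mem_insert _ _)
        · rcases hv with rfl
          rw [SetLike.mem_coe, Submodule.mem_span_pair]
          refine ⟨z⁻¹ • T ^ (e + 1), w • (1 : AN n), ?_⟩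
          simp only [hv1, hy0, hv2, Prod.smul_mk, Prod.mk_add_mk, Prod.mk.injEq, smul_eq_mul]
          constructor
          · rw [mul_zero, add_zero, smul_mul_smul_comm, hzz, one_smul, ← pow_add,
              show e + 1 + a = a + e + 1 from by omega]
          · rw [smul_mul_assoc, smul_mul_assoc, one_mul, ← pow_add,
              show e + 1 + (a + 1) = a + e + 2 from by omega, ← add_smul]
            congr 1
            rw [hwdef]; ring
      · apply Submodule.span_le.mpr
        rintro v hv
        rcases hv with hv | hv
        · exact hv ▸ Submodule.subset_span (Set.mem_insert _ _)
        · rcases hv with rfl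
          rw [SetLike.mem_coe, Submodule.mem_span_pair]
          refine ⟨(-(w⁻¹ * z⁻¹)) • T ^ (e + 1), w⁻¹ • (1 : AN n), ?_⟩
          simp only [hv1, hy0, hv2, Prod.smul_mk, Prod.mk_add_mk, Prod.mk.injEq, smul_eq_mul]
          constructor
          · rw [smul_mul_smul_comm, smul_mul_assoc, one_mul, ← pow_add,
              show e + 1 + a = a + e + 1 from by omega, ← add_smul,
              show -(w⁻¹ * z⁻¹) * z + w⁻¹ = 0 from by field_simp; ring, zero_smul]
          · rw [smul_mul_assoc, smul_mul_assoc, one_mul, smul_smul, ← pow_add,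
              show e + 1 + (a + 1) = a + e + 2 from by omega, ← add_smul,
              show -(w⁻¹ * z⁻¹) + w⁻¹ * z = 1 from by
                rw [show -(w⁻¹ * z⁻¹) + w⁻¹ * z = w⁻¹ * w from by rw [hwdef]; ring,
                  inv_mul_cancel₀ hw], one_smul]
    rw [hUz]
    apply span_pair_equiv
    intro r s
    simp only [hv1, hy0, Prod.smul_mk, Prod.mk_add_mk, smul_eq_mul, mul_zero, add_zero,
      Prod.mk_eq_zero]
    constructor
    · rintro ⟨hc1, hc2⟩
      have hra : r * T ^ a = 0 := by
        have : (z⁻¹ : ℂ) • (r * (z • T ^ a)) = 0 := by rw [hc1, smul_zero]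
        rwa [mul_smul_comm, smul_smul, hzz, one_smul] at this
      have hmem1 : r ∈ Ideal.span {T ^ (l2 + 2 + e)} := (hann a (l2 + 2 + e) (by omega) r).mp hra
      refine ⟨hmem1, ?_⟩
      have hra1 : r * T ^ (a + 1) = 0 := by
        rw [pow_succ, ← mul_assoc, hra, zero_mul]
      rw [hra1, zero_add] at hc2
      exact (hann (a + e + 2) l2 (by omega) s).mp hc2
    · rintro ⟨hr, hs⟩
      have hra : r * T ^ a = 0 := (hann a (l2 + 2 + e) (by omega) r).mpr hr
      have hsb : s * T ^ (a + e + 2) = 0 := (hann (a + e + 2) l2 (by omega) s).mpr hs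
      have hra1 : r * T ^ (a + 1) = 0 := by rw [pow_succ, ← mul_assoc, hra, zero_mul]
      rw [mul_smul_comm, hra, smul_zero, hra1, hsb, add_zero]
      exact ⟨rfl, rfl⟩
  · have hUz0 : Uz n (l2 + 2 + e) l2 0 =
        Submodule.span (AN n) {((0 : AN n), T ^ (a + 1)), (T ^ (a + e + 1), (0 : AN n))} := by
      rw [Uz, hs1, hs3, hs4]
      simp only [zero_smul]
      rfl
    rw [hUz0]
    apply span_pair_equiv
    intro r s
    simp only [Prod.smul_mk, Prod.mk_add_mk, smul_eq_mul, mul_zero, add_zero, zero_add,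
      Prod.mk_eq_zero]
    constructor
    · rintro ⟨hc1, hc2⟩
      exact ⟨(hann (a + 1) (l2 + 2 + e - 1) (by omega) r).mp hc2,
        (hann (a + e + 1) (l2 + 1) (by omega) s).mp hc1⟩
    · rintro ⟨hr, hs⟩
      exact ⟨(hann (a + e + 1) (l2 + 1) (by omega) s).mpr hs,
        (hann (a + 1) (l2 + 2 + e - 1) (by omega) r).mpr hr⟩
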